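/- arXiv:2110.02853 — 2 statements merged into one kernel-verified Lean document; each statement's English description precedes it below -/
import Mathlib

section
/- For x ∈ ℂ, let φ_x(w) = −exp(−2πi(w + τ − x)). The set of entire functions f : ℂ → ℂ satisfying f(w+1) = f(w) and f(w+τ) = φ_x(w)·f(w) for all w ∈ ℂ is a one-dimensional ℂ-subspace of the space of entire functions, spanned by θ_x(w) := θ(w + (1+τ)/2 − x); in particular θ_x is not identically zero and every such f is a scalar multiple of θ_x. -/
open Complex Matrix

noncomputable section

/-- The third Jacobi theta function `θ(z) = ∑_{m ∈ ℤ} exp(πiτm² + 2πimz)`. -/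
def theta3 (τ z : ℂ) : ℂ :=
  ∑' m : ℤ, Complex.exp (Real.pi * Complex.I * τ * (m : ℂ) ^ 2 +
    2 * Real.pi * Complex.I * (m : ℂ) * z)

/-- The first Jacobi theta function
`θ̄(z) = 2 exp(πiτ/4) ∑_{m ≥ 0} (−1)^m exp(πiτ m(m+1)) sin((2m+1)πz)`. -/
def theta1 (τ z : ℂ) : ℂ :=
  2 * Complex.exp (Real.pi * Complex.I * τ / 4) *
    ∑' m : ℕ, (-1 : ℂ) ^ m * Complex.exp (Real.pi * Complex.I * τ * (m : ℂ) * ((m : ℂ) + 1)) *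
      Complex.sin ((2 * (m : ℂ) + 1) * Real.pi * z)

/-- The Kronecker elliptic function `σ(u, z) = θ̄′(0) θ̄(u+z) / (θ̄(u) θ̄(z))`. -/
def sigmaK (τ u z : ℂ) : ℂ :=
  deriv (theta1 τ) 0 * theta1 τ (u + z) / (theta1 τ u * theta1 τ z)

/-- `φ_x(w) = −exp(−2πi(w + τ − x))`. -/
def phiFactor (τ x w : ℂ) : ℂ := -Complex.exp (-(2 * Real.pi * Complex.I) * (w + τ - x))

/-- `θ_x(w) = θ(w + (1+τ)/2 − x)`. -/
def thetaX (τ x w : ℂ) : ℂ := theta3 τ (w + (1 + τ) / 2 - x)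

/-! ### Auxiliary material -/

namespace Stmt5Aux

open Real MeasureTheory intervalIntegral Set Filter AddCircle
open scoped ENNReal NNReal

local instance fact01 : Fact ((0:ℝ) < 1) := ⟨one_pos⟩

lemma theta3_eq (τ z : ℂ) : theta3 τ z = jacobiTheta₂ z τ := by
  refine tsum_congr fun m => ?_
  rw [jacobiTheta₂_term]
  ring_nf

lemma thetaX_eq (τ x w : ℂ) : thetaX τ x w = jacobiTheta₂ (w + (1 + τ) / 2 - x) τ :=
  theta3_eq _ _

lemma thetaX_diff (τ : ℂ) (hτ : 0 < τ.im) (x : ℂ) : Differentiable ℂ (thetaX τ x) := by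
  intro w
  have h1 : DifferentiableAt ℂ (fun z => jacobiTheta₂ z τ) (w + (1 + τ) / 2 - x) :=
    differentiableAt_jacobiTheta₂_fst _ hτ
  have h2 : DifferentiableAt ℂ (fun w : ℂ => w + (1 + τ) / 2 - x) w := by fun_prop
  have h3 := h1.comp w h2
  have h4 : thetaX τ x = (fun z => jacobiTheta₂ z τ) ∘ fun w : ℂ => w + (1 + τ) / 2 - x := by
    funext z; exact thetaX_eq τ x z
  rw [h4]; exact h3

lemma thetaX_per (τ x : ℂ) (w : ℂ) : thetaX τ x (w + 1) = thetaX τ x w := by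
  rw [thetaX_eq, thetaX_eq, show w + 1 + (1 + τ) / 2 - x = (w + (1 + τ) / 2 - x) + 1 by ring,
    jacobiTheta₂_add_left]

lemma thetaX_quasi (τ x : ℂ) (w : ℂ) :
    thetaX τ x (w + τ) = phiFactor τ x w * thetaX τ x w := by
  rw [thetaX_eq, thetaX_eq, show w + τ + (1 + τ) / 2 - x = (w + (1 + τ) / 2 - x) + τ by ring,
    jacobiTheta₂_add_left']
  congr 1
  rw [phiFactor, show -↑π * I * (τ + 2 * (w + (1 + τ) / 2 - x)) =
    -(2 * ↑π * I) * (w + τ - x) + -(↑π * I) by ring, Complex.exp_add, Complex.exp_neg,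
    Complex.exp_pi_mul_I]
  ring

/-- Fourier-type coefficient of `f` at height `y`. -/
def coefA (f : ℂ → ℂ) (n : ℤ) (y : ℝ) : ℂ :=
  ∫ t in (0:ℝ)..1, f (t + y * I) * Complex.exp (-(2 * π * I) * n * (t + y * I))

lemma expFac_per (n : ℤ) (w : ℂ) :
    Complex.exp (-(2 * ↑π * I) * n * (w + 1)) = Complex.exp (-(2 * ↑π * I) * n * w) := by
  rw [show -(2 * (π:ℂ) * I) * n * (w + 1) = -(2 * ↑π * I) * n * w + (-n : ℤ) * (2 * ↑π * I) by
    push_cast; ring, Complex.exp_add, Complex.exp_int_mul_two_pi_mul_I, mul_one]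

lemma coefA_height {f : ℂ → ℂ} (hf : Differentiable ℂ f) (hper : ∀ w, f (w + 1) = f w)
    (n : ℤ) (y₁ y₂ : ℝ) : coefA f n y₁ = coefA f n y₂ := by
  set F : ℂ → ℂ := fun w => f w * Complex.exp (-(2 * π * I) * n * w) with hF
  have hFd : Differentiable ℂ F := hf.mul (by fun_prop)
  have hFper : ∀ w, F (w + 1) = F w := fun w => by
    simp only [hF, hper w, expFac_per]
  have key := Complex.integral_boundary_rect_eq_zero_of_differentiableOn F
    ((y₁ : ℂ) * I) (1 + (y₂ : ℂ) * I) hFd.differentiableOn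
  have hre1 : ((y₁ : ℂ) * I).re = 0 := by simp
  have him1 : ((y₁ : ℂ) * I).im = y₁ := by simp
  have hre2 : (1 + (y₂ : ℂ) * I).re = 1 := by simp
  have him2 : (1 + (y₂ : ℂ) * I).im = y₂ := by simp
  rw [hre1, him1, hre2, him2] at key
  have hvert : (∫ y : ℝ in y₁..y₂, F (((1:ℝ):ℂ) + y * I))
      = ∫ y : ℝ in y₁..y₂, F (((0:ℝ):ℂ) + y * I) := by
    refine intervalIntegral.integral_congr fun y _ => ?_
    rw [show ((1:ℝ) : ℂ) + (y:ℂ) * I = ((((0:ℝ):ℂ)) + (y:ℂ) * I) + 1 by push_cast; ring, hFper]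
  rw [hvert] at key
  simp only [smul_eq_mul] at key
  have : (∫ x : ℝ in (0:ℝ)..1, F (x + y₁ * I)) = ∫ x : ℝ in (0:ℝ)..1, F (x + y₂ * I) := by
    linear_combination key
  simpa only [coefA, hF] using this

/-- Translation by `τ` of the integral of a 1-periodic function. -/
lemma integral_shift {G : ℂ → ℂ} (hper : ∀ w, G (w + 1) = G w) (y : ℝ) (τ : ℂ) :
    (∫ t in (0:ℝ)..1, G (t + y * I + τ)) = ∫ t in (0:ℝ)..1, G (t + (y + τ.im : ℝ) * I) := by
  set g : ℝ → ℂ := fun s => G (s + (y + τ.im : ℝ) * I) with hg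
  have harg : ∀ t : ℝ, (t : ℂ) + y * I + τ = ((t + τ.re : ℝ) : ℂ) + ((y + τ.im : ℝ) : ℂ) * I := by
    intro t
    simp [Complex.ext_iff]
  have h1 : (∫ t in (0:ℝ)..1, G (t + y * I + τ)) = ∫ t in (0:ℝ)..1, g (t + τ.re) := by
    refine intervalIntegral.integral_congr fun t _ => ?_
    rw [harg t, hg]
  rw [h1, intervalIntegral.integral_comp_add_right g τ.re]
  have hgper : Function.Periodic g 1 := fun s => by
    simp only [hg]
    rw [show ((s + 1 : ℝ) : ℂ) + ((y + τ.im : ℝ) : ℂ) * I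
        = ((s : ℂ) + ((y + τ.im : ℝ) : ℂ) * I) + 1 by push_cast; ring, hper]
  have h2 := hgper.intervalIntegral_add_eq τ.re 0
  rw [zero_add] at h2
  rw [zero_add, add_comm (1:ℝ) τ.re, h2]

lemma coefA_rec (τ x : ℂ) {f : ℂ → ℂ} (hf : Differentiable ℂ f) (hper : ∀ w, f (w + 1) = f w)
    (hq : ∀ w, f (w + τ) = phiFactor τ x w * f w) (n : ℤ) :
    coefA f n 0 = -Complex.exp (-(2 * π * I) * (τ - x) + -(2 * π * I) * n * τ)
      * coefA f (n + 1) 0 := by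
  set d : ℂ := -Complex.exp (-(2 * π * I) * (τ - x) + -(2 * π * I) * n * τ) with hd
  set F : ℂ → ℂ := fun w => f w * Complex.exp (-(2 * π * I) * n * w) with hF
  have hFper : ∀ w, F (w + 1) = F w := fun w => by simp only [hF, hper w, expFac_per]
  have hFq : ∀ w, F (w + τ) = d * (f w * Complex.exp (-(2 * π * I) * (n + 1 : ℤ) * w)) := by
    intro w
    simp only [hF, hq w, phiFactor, hd]
    rw [show -Complex.exp (-(2 * ↑π * I) * (w + τ - x)) * f w
        * Complex.exp (-(2 * ↑π * I) * ↑n * (w + τ))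
        = -(Complex.exp (-(2 * ↑π * I) * (w + τ - x)) * Complex.exp (-(2 * ↑π * I) * ↑n * (w + τ)))
          * f w by ring, ← Complex.exp_add]
    rw [show -(2 * ↑π * I) * (w + τ - x) + -(2 * ↑π * I) * ↑n * (w + τ)
        = (-(2 * ↑π * I) * (τ - x) + -(2 * ↑π * I) * ↑n * τ) + -(2 * ↑π * I) * ((n : ℂ) + 1) * w by
        ring, Complex.exp_add]
    push_cast
    ring
  have h1 : (∫ t in (0:ℝ)..1, F (t + (0:ℝ) * I + τ)) = coefA f n 0 := by
    rw [integral_shift hFper 0 τ]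
    have := coefA_height hf hper n (0 + τ.im) 0
    simpa only [coefA, hF] using this
  have h2 : (∫ t in (0:ℝ)..1, F (t + (0:ℝ) * I + τ)) = d * coefA f (n + 1) 0 := by
    rw [coefA, ← intervalIntegral.integral_const_mul]
    refine intervalIntegral.integral_congr fun t _ => ?_
    rw [hFq]
  rw [← h1, h2]

lemma coefA_all_zero (τ x : ℂ) {f : ℂ → ℂ} (hf : Differentiable ℂ f)
    (hper : ∀ w, f (w + 1) = f w) (hq : ∀ w, f (w + τ) = phiFactor τ x w * f w)
    (h0 : coefA f 0 0 = 0) : ∀ n : ℤ, coefA f n 0 = 0 := by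
  have key : ∀ n : ℤ, coefA f n 0 = 0 → coefA f (n + 1) 0 = 0 := by
    intro n hn
    have hrec := coefA_rec τ x hf hper hq n
    rw [hn] at hrec
    have hd : (-Complex.exp (-(2 * ↑π * I) * (τ - x) + -(2 * ↑π * I) * ↑n * τ)) ≠ 0 := by
      simp [Complex.exp_ne_zero]
    rcases mul_eq_zero.mp hrec.symm with h | h
    · exact absurd h hd
    · exact h
  intro n
  induction n using Int.induction_on with
  | zero => exact h0
  | succ k ih => exact_mod_cast key k (by exact_mod_cast ih)
  | pred k ih =>
    have hrec := coefA_rec τ x hf hper hq (-(k:ℤ) - 1)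
    rw [show (-(k:ℤ) - 1 + 1) = -(k:ℤ) by ring] at hrec
    rw [hrec, ih, mul_zero]

lemma fourier_unique (G : C(AddCircle (1:ℝ), ℂ))
    (hc : ∀ n : ℤ, fourierCoeff (⇑G) n = 0) : ∀ z, G z = 0 := by
  have h1 : ∀ n : ℤ, fourierBasis.repr (ContinuousMap.toLp (E := ℂ) 2 haarAddCircle ℂ G) n = 0 := by
    intro n
    rw [fourierBasis_repr, fourierCoeff_toLp]
    exact hc n
  have h2 : ContinuousMap.toLp (E := ℂ) 2 haarAddCircle ℂ G = 0 := by
    rw [← (fourierBasis (T := 1)).repr.map_eq_zero_iff]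
    ext n
    simpa using h1 n
  have h3 : (⇑G : AddCircle (1:ℝ) → ℂ) =ᵐ[(haarAddCircle : Measure (AddCircle (1:ℝ)))]
      (fun _ => (0:ℂ)) := by
    have ha := ContinuousMap.coeFn_toLp (p := 2) (μ := haarAddCircle) (𝕜 := ℂ) G
    rw [h2] at ha
    exact ha.symm.trans (Lp.coeFn_zero ℂ 2 haarAddCircle)
  have h4 : (⇑G : AddCircle (1:ℝ) → ℂ) = fun _ => (0:ℂ) :=
    Measure.eq_of_ae_eq h3 G.continuous continuous_const
  intro z
  exact congrFun h4 z

lemma zero_of_real_zero {h : ℂ → ℂ} (hd : Differentiable ℂ h)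
    (h0 : ∀ t : ℝ, t ∈ Ico (0:ℝ) 1 → h t = 0) : h = 0 := by
  have han : AnalyticOnNhd ℂ h univ :=
    hd.differentiableOn.analyticOnNhd isOpen_univ
  have hfreq : ∃ᶠ z in nhdsWithin 0 {(0:ℂ)}ᶜ, h z = 0 := by
    have htend : Tendsto (fun n : ℕ => ((1:ℝ) / (n + 2) : ℝ) : ℕ → ℂ) atTop
        (nhdsWithin 0 {(0:ℂ)}ᶜ) := by
      apply tendsto_nhdsWithin_of_tendsto_nhds_of_eventually_within
      · have hre : Tendsto (fun n : ℕ => ((1:ℝ) / (n + 2))) atTop (nhds 0) := by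
          simp only [one_div]
          exact (tendsto_atTop_add_const_right atTop (2:ℝ)
            tendsto_natCast_atTop_atTop).inv_tendsto_atTop
        have := (Complex.continuous_ofReal.tendsto 0).comp hre
        simpa [Function.comp_def, one_div] using this
      · filter_upwards with n
        simp only [mem_compl_iff, mem_singleton_iff]
        intro hcon
        have : ((1:ℝ) / (n + 2)) = 0 := by exact_mod_cast hcon
        have hpos : (0:ℝ) < 1 / (n + 2) := by positivity
        linarith
    apply htend.frequently
    apply Filter.Frequently.of_forall
    intro n
    apply h0
    constructor
    · positivity
    · rw [div_lt_one (by positivity)]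
      linarith [Nat.cast_nonneg (α := ℝ) n]
  have := han.eqOn_zero_of_preconnected_of_frequently_eq_zero isPreconnected_univ
    (mem_univ 0) hfreq
  funext z
  exact this (mem_univ z)

lemma coefA_eq_fourierCoeff {h : ℂ → ℂ} (n : ℤ) :
    fourierCoeff (AddCircle.liftIco 1 0 (fun t : ℝ => h t)) n = coefA h n 0 := by
  rw [fourierCoeff_liftIco_eq, fourierCoeffOn_eq_integral, coefA]
  simp only [fourier_coe_apply]
  norm_num
  refine intervalIntegral.integral_congr fun t _ => ?_
  ring

lemma zero_fun_of_coefA {h : ℂ → ℂ} (hd : Differentiable ℂ h) (hper : ∀ w, h (w + 1) = h w)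
    (hc : ∀ n : ℤ, coefA h n 0 = 0) : h = 0 := by
  set hr : ℝ → ℂ := fun t => h t with hhr
  have hend : hr 0 = hr (0 + 1) := by
    simp only [hhr]
    rw [show (((0:ℝ) + 1 : ℝ) : ℂ) = (0:ℂ) + 1 by norm_num, hper]
    norm_num
  have hGcont : Continuous (AddCircle.liftIco 1 0 hr) :=
    AddCircle.liftIco_continuous hend
      ((hd.continuous.comp Complex.continuous_ofReal).continuousOn)
  set G : C(AddCircle (1:ℝ), ℂ) := ⟨AddCircle.liftIco 1 0 hr, hGcont⟩ with hG
  have hz := fourier_unique G (fun n => by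
    rw [hG, ContinuousMap.coe_mk, coefA_eq_fourierCoeff]
    exact hc n)
  have h0 : ∀ t : ℝ, t ∈ Ico (0:ℝ) 1 → h t = 0 := by
    intro t ht
    have := hz ((t : ℝ) : AddCircle (1:ℝ))
    rw [hG, ContinuousMap.coe_mk, AddCircle.liftIco_coe_apply (by simpa using ht)] at this
    exact this
  exact zero_of_real_zero hd h0

lemma coefA_sub (f g : ℂ → ℂ) (hf : Continuous f) (hg : Continuous g) (c : ℂ) (n : ℤ) (y : ℝ) :
    coefA (fun w => f w - c * g w) n y = coefA f n y - c * coefA g n y := by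
  have hcf : Continuous fun t : ℝ => f (↑t + ↑y * I) * Complex.exp (-(2*↑π*I) * ↑n * (↑t + ↑y*I)) :=
    (hf.comp (by continuity)).mul (Complex.continuous_exp.comp (by continuity))
  have hcg : Continuous fun t : ℝ => g (↑t + ↑y * I) * Complex.exp (-(2*↑π*I) * ↑n * (↑t + ↑y*I)) :=
    (hg.comp (by continuity)).mul (Complex.continuous_exp.comp (by continuity))
  rw [coefA, coefA, coefA]
  rw [show (fun t : ℝ => (f (↑t + ↑y*I) - c * g (↑t + ↑y*I)) *
        Complex.exp (-(2 * ↑π * I) * ↑n * (↑t + ↑y*I)))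
      = fun t : ℝ => f (↑t + ↑y*I) * Complex.exp (-(2*↑π*I) * ↑n * (↑t + ↑y*I))
        - c * (g (↑t + ↑y*I) * Complex.exp (-(2*↑π*I) * ↑n * (↑t + ↑y*I)))
      from funext fun t => by ring]
  rw [intervalIntegral.integral_sub (hcf.intervalIntegrable _ _)
    ((hcg.intervalIntegrable _ _).const_mul c), intervalIntegral.integral_const_mul]

lemma coefA_thetaX (τ : ℂ) (hτ : 0 < τ.im) (x : ℂ) : coefA (thetaX τ x) 0 0 = 1 := by
  set c : ℂ := (1 + τ) / 2 - x with hc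
  set g : ℤ → ℝ → ℂ := fun m t =>
    Complex.exp (π * I * τ * (m:ℂ)^2 + 2 * π * I * m * c) * Complex.exp (2 * π * I * m * t)
    with hg
  have hsummand : ∀ t : ℝ, thetaX τ x ((t:ℂ) + ((0:ℝ):ℂ) * I) *
      Complex.exp (-(2 * π * I) * (0:ℤ) * ((t:ℂ) + ((0:ℝ):ℂ) * I))
      = ∑' m : ℤ, g m t := by
    intro t
    rw [show ((t:ℂ) + ((0:ℝ):ℂ) * I) = (t:ℂ) by norm_num]
    rw [show (-(2 * (π:ℂ) * I) * ((0:ℤ):ℂ) * (t:ℂ)) = 0 by push_cast; ring,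
      Complex.exp_zero, mul_one, thetaX, theta3]
    refine tsum_congr fun m => ?_
    have hbeta : g m t = Complex.exp (π * I * τ * (m:ℂ)^2 + 2 * π * I * m * c) *
        Complex.exp (2 * π * I * m * t) := rfl
    rw [hbeta, ← Complex.exp_add]
    congr 1
    ring
  have hnorm : ∀ m : ℤ, ∀ t : ℝ, ‖g m t‖ = ‖jacobiTheta₂_term m c τ‖ := by
    intro m t
    rw [hg, jacobiTheta₂_term, norm_mul]
    rw [show ‖Complex.exp (2 * ↑π * I * ↑m * ↑t)‖ = 1 by
      rw [Complex.norm_exp]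
      convert Real.exp_zero using 2
      simp]
    rw [mul_one, Complex.norm_exp, Complex.norm_exp]
    congr 1
    simp [Complex.add_re, Complex.mul_re, Complex.mul_im]
    ring
  have hsum : Summable fun m : ℤ => ‖jacobiTheta₂_term m c τ‖ :=
    summable_norm_iff.mpr ((summable_jacobiTheta₂_term_iff c τ).mpr hτ)
  rw [coefA]
  rw [intervalIntegral.integral_of_le zero_le_one]
  rw [show (fun t : ℝ => thetaX τ x (↑t + ↑(0:ℝ) * I) *
      Complex.exp (-(2 * ↑π * I) * ↑(0:ℤ) * (↑t + ↑(0:ℝ) * I))) = fun t : ℝ => ∑' m : ℤ, g m t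
    from funext fun t => hsummand t]
  have hbound : ∑' m : ℤ, ∫⁻ t in Ioc (0:ℝ) 1, (‖g m t‖₊ : ℝ≥0∞) ≠ ⊤ := by
    have heval : ∀ m : ℤ, (∫⁻ t in Ioc (0:ℝ) 1, (‖g m t‖₊ : ℝ≥0∞))
        = (‖jacobiTheta₂_term m c τ‖₊ : ℝ≥0∞) := by
      intro m
      rw [show (fun t : ℝ => (‖g m t‖₊ : ℝ≥0∞)) = fun _ => (‖jacobiTheta₂_term m c τ‖₊ : ℝ≥0∞)
        from funext fun t => by
          congr 1
          ext
          exact hnorm m t]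
      rw [MeasureTheory.setLIntegral_const, Real.volume_Ioc]
      norm_num
    rw [show (fun m : ℤ => ∫⁻ t in Ioc (0:ℝ) 1, (‖g m t‖₊ : ℝ≥0∞))
      = fun m : ℤ => (‖jacobiTheta₂_term m c τ‖₊ : ℝ≥0∞) from funext heval]
    rw [ENNReal.tsum_coe_ne_top_iff_summable]
    apply NNReal.summable_coe.mp
    simpa [coe_nnnorm] using hsum
  have hmeas : ∀ m : ℤ, AEStronglyMeasurable (g m) (volume.restrict (Ioc (0:ℝ) 1)) := fun m =>
    Continuous.aestronglyMeasurable (by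
      simp only [hg]
      fun_prop)
  rw [MeasureTheory.integral_tsum hmeas hbound]
  · rw [tsum_eq_single 0]
    · simp only [hg]
      norm_num
    · intro m hm
      have hme : ∀ t : ℝ, g m t = Complex.exp (π * I * τ * (m:ℂ)^2 + 2 * π * I * m * c) *
          Complex.exp ((2 * π * I * m) * t) := fun t => rfl
      rw [show (∫ t in Ioc (0:ℝ) 1, g m t) = ∫ t in (0:ℝ)..1, g m t from
        (intervalIntegral.integral_of_le zero_le_one).symm]
      rw [show (fun t : ℝ => g m t) = fun t : ℝ =>
        Complex.exp (π * I * τ * (m:ℂ)^2 + 2 * π * I * m * c) *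
          Complex.exp ((2 * π * I * m) * t) from funext hme]
      rw [intervalIntegral.integral_const_mul, integral_exp_mul_complex (by
        simp only [ne_eq, mul_eq_zero, not_or]
        refine ⟨⟨⟨two_ne_zero, ?_⟩, I_ne_zero⟩, ?_⟩
        · exact_mod_cast Real.pi_ne_zero
        · exact_mod_cast hm)]
      rw [show (2 * (π:ℂ) * I * m * ((1:ℝ):ℂ)) = (m : ℤ) * (2 * π * I) by push_cast; ring,
        Complex.exp_int_mul_two_pi_mul_I,
        show (2 * (π:ℂ) * I * m * ((0:ℝ):ℂ)) = 0 by push_cast; ring, Complex.exp_zero]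
      simp

end Stmt5Aux

open Stmt5Aux in
/-- The space of entire solutions of the functional equations
`f(w+1) = f(w)`, `f(w+τ) = φ_x(w) f(w)` is one-dimensional, spanned by `θ_x`. -/
theorem stmt5 (τ : ℂ) (hτ : 0 < τ.im) (x : ℂ) :
    (Differentiable ℂ (thetaX τ x) ∧
      (∀ w : ℂ, thetaX τ x (w + 1) = thetaX τ x w) ∧
      (∀ w : ℂ, thetaX τ x (w + τ) = phiFactor τ x w * thetaX τ x w)) ∧
    thetaX τ x ≠ 0 ∧
    (∀ f : ℂ → ℂ, Differentiable ℂ f → (∀ w : ℂ, f (w + 1) = f w) →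
      (∀ w : ℂ, f (w + τ) = phiFactor τ x w * f w) →
      ∃ c : ℂ, f = fun w => c * thetaX τ x w) := by
  refine ⟨⟨thetaX_diff τ hτ x, thetaX_per τ x, thetaX_quasi τ x⟩, ?_, ?_⟩
  · intro hzero
    have h1 := coefA_thetaX τ hτ x
    rw [hzero] at h1
    simp [coefA] at h1
  · intro f hfd hfper hfq
    refine ⟨coefA f 0 0, ?_⟩
    set c := coefA f 0 0 with hcdef
    set h : ℂ → ℂ := fun w => f w - c * thetaX τ x w with hh
    have hhd : Differentiable ℂ h := hfd.sub ((thetaX_diff τ hτ x).const_mul c)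
    have hhper : ∀ w, h (w + 1) = h w := fun w => by
      simp only [hh]
      rw [hfper, thetaX_per]
    have hhq : ∀ w, h (w + τ) = phiFactor τ x w * h w := fun w => by
      simp only [hh]
      rw [hfq, thetaX_quasi]
      ring
    have h00 : coefA h 0 0 = 0 := by
      rw [hh, coefA_sub f (thetaX τ x) hfd.continuous (thetaX_diff τ hτ x).continuous c 0 0,
        coefA_thetaX τ hτ x]
      simp [hcdef]
    have hall := coefA_all_zero τ x hhd hhper hhq h00
    have hzero := zero_fun_of_coefA hhd hhper hall
    funext w
    have hw := congrFun hzero w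
    simp only [hh, Pi.zero_apply] at hw
    linear_combination hw
end
end

section
/- The complex derivatives of the two Jacobi theta functions satisfy θ′((1+τ)/2) = i · exp(−πiτ/4) · θ̄′(0). -/
open Complex Matrix

noncomputable section

/-- `theta3` agrees with Mathlib's two-variable Jacobi theta function. -/
lemma theta3_eq_jacobiTheta₂ (τ : ℂ) : theta3 τ = (jacobiTheta₂ · τ) := by
  funext z
  rw [theta3, jacobiTheta₂]
  refine tsum_congr fun n => ?_
  rw [jacobiTheta₂_term]
  congr 1
  ring

/-- The two-variable Jacobi theta function vanishes at `(1+τ)/2`. -/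
lemma jacobiTheta₂_half_one_add_self (τ : ℂ) : jacobiTheta₂ ((1 + τ) / 2) τ = 0 := by
  set z₀ : ℂ := (1 + τ) / 2 with hz₀
  have h1 : jacobiTheta₂ ((-z₀ + 1) + τ) τ = cexp (-↑Real.pi * I * (τ + 2 * (-z₀ + 1))) *
      jacobiTheta₂ (-z₀ + 1) τ := jacobiTheta₂_add_left' _ _
  have e1 : (-z₀ + 1) + τ = z₀ := by rw [hz₀]; ring
  have e2 : τ + 2 * (-z₀ + 1) = 1 := by rw [hz₀]; ring
  rw [e1, e2, jacobiTheta₂_add_left, jacobiTheta₂_neg_left, mul_one] at h1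
  have : cexp (-↑Real.pi * I) = -1 := by
    rw [show (-↑Real.pi * I : ℂ) = -(↑Real.pi * I) by ring, Complex.exp_neg,
      Complex.exp_pi_mul_I]
    norm_num
  rw [this] at h1
  linear_combination h1 / 2

/-- Per-term identity relating pairs of `jacobiTheta₂` terms to the `theta1` summands. -/
lemma theta1_term_identity (τ z : ℂ) (m : ℕ) :
    jacobiTheta₂_term (m : ℤ) (z + (1 + τ) / 2) τ
      + jacobiTheta₂_term (-((m : ℤ) + 1)) (z + (1 + τ) / 2) τ
    = (2 * I * cexp (-(↑Real.pi * I * z))) *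
        ((-1 : ℂ) ^ m * Complex.exp (Real.pi * Complex.I * τ * (m : ℂ) * ((m : ℂ) + 1)) *
          Complex.sin ((2 * (m : ℂ) + 1) * Real.pi * z)) := by
  have hpm : cexp ((m : ℂ) * (↑Real.pi * I)) = (-1 : ℂ) ^ m := by
    rw [Complex.exp_nat_mul, Complex.exp_pi_mul_I]
  have hpm' : cexp (-(((m : ℂ) + 1) * (↑Real.pi * I))) = -(-1 : ℂ) ^ m := by
    rw [show (-(((m : ℂ) + 1) * (↑Real.pi * I))) = ((m + 1 : ℕ) : ℂ) * (-(↑Real.pi * I))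
      by push_cast; ring, Complex.exp_nat_mul, Complex.exp_neg, Complex.exp_pi_mul_I, pow_succ]
    norm_num
  have h1 : jacobiTheta₂_term (m : ℤ) (z + (1 + τ) / 2) τ
      = (-1 : ℂ) ^ m * (cexp (↑Real.pi * I * τ * m * (m + 1) + 2 * ↑Real.pi * I * m * z)) := by
    rw [jacobiTheta₂_term, ← hpm, ← Complex.exp_add]
    congr 1
    push_cast
    ring
  have h2 : jacobiTheta₂_term (-((m : ℤ) + 1)) (z + (1 + τ) / 2) τ
      = -(-1 : ℂ) ^ m *
        (cexp (↑Real.pi * I * τ * m * (m + 1) - 2 * ↑Real.pi * I * (m + 1) * z)) := by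
    rw [jacobiTheta₂_term, ← hpm', ← Complex.exp_add]
    congr 1
    push_cast
    ring
  rw [h1, h2, Complex.sin]
  have e1 : cexp (-(↑Real.pi * I * z)) * cexp (-((2 * (m : ℂ) + 1) * ↑Real.pi * z) * I)
      = cexp (-(2 * ↑Real.pi * I * ((m : ℂ) + 1) * z)) := by
    rw [← Complex.exp_add]; congr 1; ring
  have e2 : cexp (-(↑Real.pi * I * z)) * cexp (((2 * (m : ℂ) + 1) * ↑Real.pi * z) * I)
      = cexp (2 * ↑Real.pi * I * (m : ℂ) * z) := by
    rw [← Complex.exp_add]; congr 1; ring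
  have ha : cexp (↑Real.pi * I * τ * m * (m + 1) + 2 * ↑Real.pi * I * m * z)
      = cexp (↑Real.pi * I * τ * m * (m + 1)) * cexp (2 * ↑Real.pi * I * (m:ℂ) * z) := by
    rw [← Complex.exp_add]
  have hb : cexp (↑Real.pi * I * τ * m * (m + 1) - 2 * ↑Real.pi * I * (m + 1) * z)
      = cexp (↑Real.pi * I * τ * m * (m + 1)) * cexp (-(2 * ↑Real.pi * I * ((m:ℂ) + 1) * z)) := by
    rw [← Complex.exp_add, ← sub_eq_add_neg]
  rw [ha, hb, ← e1, ← e2]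
  ring_nf
  rw [Complex.I_sq]
  ring

/-- `theta1` in terms of `jacobiTheta₂`. -/
lemma theta1_eq (τ : ℂ) (hτ : 0 < τ.im) (z : ℂ) :
    theta1 τ z = -I * cexp (↑Real.pi * I * τ / 4 + ↑Real.pi * I * z) *
      jacobiTheta₂ (z + (1 + τ) / 2) τ := by
  have hsum : Summable (jacobiTheta₂_term · (z + (1 + τ) / 2) τ) :=
    (summable_jacobiTheta₂_term_iff _ τ).mpr hτ
  have key : jacobiTheta₂ (z + (1 + τ) / 2) τ
      = ∑' m : ℕ, (jacobiTheta₂_term (m : ℤ) (z + (1 + τ) / 2) τ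
          + jacobiTheta₂_term (-((m : ℤ) + 1)) (z + (1 + τ) / 2) τ) :=
    (tsum_nat_add_neg_add_one hsum).symm
  rw [theta1, key, tsum_congr (fun m => theta1_term_identity τ z m), tsum_mul_left]
  set S : ℂ := ∑' m : ℕ, (-1 : ℂ) ^ m *
      Complex.exp (Real.pi * Complex.I * τ * (m : ℂ) * ((m : ℂ) + 1)) *
      Complex.sin ((2 * (m : ℂ) + 1) * Real.pi * z) with hS
  have hc : cexp (↑Real.pi * I * z) * cexp (-(↑Real.pi * I * z)) = 1 := by
    rw [← Complex.exp_add]; simp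
  rw [Complex.exp_add]
  rw [show -I * (cexp (↑Real.pi * I * τ / 4) * cexp (↑Real.pi * I * z)) *
      (2 * I * cexp (-(↑Real.pi * I * z)) * S)
      = (-(I * I)) * (cexp (↑Real.pi * I * z) * cexp (-(↑Real.pi * I * z))) *
        (2 * cexp (↑Real.pi * I * τ / 4) * S) from by ring, hc, Complex.I_mul_I]
  ring

/-- Relation between the derivatives of the two Jacobi theta functions. -/
theorem stmt7 (τ : ℂ) (hτ : 0 < τ.im) :
    deriv (theta3 τ) ((1 + τ) / 2)
      = Complex.I * Complex.exp (-(Real.pi * Complex.I * τ) / 4) * deriv (theta1 τ) 0 := by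
  have hd3 : HasDerivAt (theta3 τ) (jacobiTheta₂' ((1 + τ) / 2) τ) ((1 + τ) / 2) := by
    rw [theta3_eq_jacobiTheta₂]
    exact hasDerivAt_jacobiTheta₂_fst _ hτ
  have h1 : HasDerivAt (fun z : ℂ => cexp (↑Real.pi * I * τ / 4 + ↑Real.pi * I * z))
      (cexp (↑Real.pi * I * τ / 4 + ↑Real.pi * I * 0) * (↑Real.pi * I)) 0 := by
    have hlin : HasDerivAt (fun z : ℂ => ↑Real.pi * I * τ / 4 + ↑Real.pi * I * z)
        (↑Real.pi * I) 0 := by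
      simpa using ((hasDerivAt_id (0 : ℂ)).const_mul (↑Real.pi * I)).const_add
        (↑Real.pi * I * τ / 4)
    exact hlin.cexp
  have h2 : HasDerivAt (fun z : ℂ => jacobiTheta₂ (z + (1 + τ) / 2) τ)
      (jacobiTheta₂' ((0 : ℂ) + (1 + τ) / 2) τ * 1) 0 :=
    by rw [mul_one]; exact (hasDerivAt_jacobiTheta₂_fst ((0 : ℂ) + (1 + τ) / 2) hτ).comp_add_const 0 _
  have hd1 : HasDerivAt (theta1 τ)
      (-I * cexp (↑Real.pi * I * τ / 4) * jacobiTheta₂' ((1 + τ) / 2) τ) 0 := by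
    have hfun : theta1 τ = fun z => -I * cexp (↑Real.pi * I * τ / 4 + ↑Real.pi * I * z) *
        jacobiTheta₂ (z + (1 + τ) / 2) τ := funext (theta1_eq τ hτ)
    rw [hfun]
    have := (h1.mul h2).const_mul (-I)
    simp only [zero_add, mul_zero, mul_one] at this ⊢
    exact (this.congr_deriv (by rw [jacobiTheta₂_half_one_add_self]; ring)).congr_of_eventuallyEq
      (Filter.Eventually.of_forall fun y => by simp only [Pi.mul_apply]; ring)
  rw [hd3.deriv, hd1.deriv]
  have hc : cexp (-(↑Real.pi * I * τ) / 4) * cexp (↑Real.pi * I * τ / 4) = 1 := by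
    rw [← Complex.exp_add, show (-(↑Real.pi * I * τ) / 4 + ↑Real.pi * I * τ / 4 : ℂ) = 0
      by ring, Complex.exp_zero]
  rw [show I * cexp (-(↑Real.pi * I * τ) / 4) *
      (-I * cexp (↑Real.pi * I * τ / 4) * jacobiTheta₂' ((1 + τ) / 2) τ)
      = (-(I * I)) * (cexp (-(↑Real.pi * I * τ) / 4) * cexp (↑Real.pi * I * τ / 4)) *
        jacobiTheta₂' ((1 + τ) / 2) τ from by ring, hc, Complex.I_mul_I]
  ring
end
end
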